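/- For all x ∈ (0, π/2), one has π/2 + cos x < x/sin x + 2·(x/tan x) < 2 + cos x. -/

import Mathlib

open Real

private noncomputable def gFun (y : ℝ) : ℝ := (2 + Real.cos y) * Real.sin y - y * (1 + 2 * Real.cos y)

private lemma gFun_deriv (y : ℝ) :
    HasDerivAt gFun (2 * Real.sin y * (y - Real.sin y)) y := by
  have h1 : HasDerivAt (fun y : ℝ => (2 + Real.cos y) * Real.sin y)
      ((-Real.sin y) * Real.sin y + (2 + Real.cos y) * Real.cos y) y := by
    have := (((hasDerivAt_const y (2:ℝ)).add (Real.hasDerivAt_cos y)).mul (Real.hasDerivAt_sin y))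
    refine this.congr_deriv ?_; simp only [Pi.add_apply, Pi.mul_apply, id_eq]; ring
  have h2 : HasDerivAt (fun y : ℝ => y * (1 + 2 * Real.cos y))
      (1 * (1 + 2 * Real.cos y) + y * (2 * (-Real.sin y))) y := by
    have := (hasDerivAt_id y).mul ((hasDerivAt_const y (1:ℝ)).add
      ((hasDerivAt_const y (2:ℝ)).mul (Real.hasDerivAt_cos y)))
    refine this.congr_deriv ?_; simp only [Pi.add_apply, Pi.mul_apply, id_eq]; ring
  have := h1.sub h2
  refine this.congr_deriv ?_
  have := Real.sin_sq_add_cos_sq y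
  nlinarith [this]

private noncomputable def hFun (y : ℝ) : ℝ := y * (1 + 2 * Real.cos y) - (π/2 + Real.cos y) * Real.sin y

private noncomputable def h1Fun (y : ℝ) : ℝ :=
  1 + 2 * Real.cos y - 2 * y * Real.sin y + Real.sin y ^ 2 - (π/2) * Real.cos y - Real.cos y ^ 2

private lemma hFun_deriv (y : ℝ) : HasDerivAt hFun (h1Fun y) y := by
  have h2 : HasDerivAt (fun y : ℝ => y * (1 + 2 * Real.cos y))
      (1 * (1 + 2 * Real.cos y) + y * (2 * (-Real.sin y))) y := by
    have := (hasDerivAt_id y).mul ((hasDerivAt_const y (1:ℝ)).add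
      ((hasDerivAt_const y (2:ℝ)).mul (Real.hasDerivAt_cos y)))
    refine this.congr_deriv ?_; simp only [Pi.add_apply, Pi.mul_apply, id_eq]; ring
  have h3 : HasDerivAt (fun y : ℝ => (π/2 + Real.cos y) * Real.sin y)
      ((-Real.sin y) * Real.sin y + (π/2 + Real.cos y) * Real.cos y) y := by
    have := (((hasDerivAt_const y (π/2)).add (Real.hasDerivAt_cos y)).mul (Real.hasDerivAt_sin y))
    refine this.congr_deriv ?_; simp only [Pi.add_apply, Pi.mul_apply, id_eq]; ring
  have := h2.sub h3
  refine this.congr_deriv ?_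
  unfold h1Fun
  ring

private lemma h1Fun_deriv (y : ℝ) :
    HasDerivAt h1Fun ((π/2 - 4) * Real.sin y + 4 * Real.sin y * Real.cos y - 2 * y * Real.cos y) y := by
  have hs := Real.hasDerivAt_sin y
  have hc := Real.hasDerivAt_cos y
  have h1 : HasDerivAt (fun y : ℝ => 2 * y * Real.sin y)
      (2 * Real.sin y + 2 * y * Real.cos y) y := by
    have := (((hasDerivAt_const y (2:ℝ)).mul (hasDerivAt_id y)).mul hs)
    refine this.congr_deriv ?_; simp only [Pi.add_apply, Pi.mul_apply, id_eq]; ring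
  have h2 : HasDerivAt (fun y : ℝ => Real.sin y ^ 2) (2 * Real.sin y * Real.cos y) y := by
    have := hs.pow 2
    refine this.congr_deriv ?_; ring
  have h3 : HasDerivAt (fun y : ℝ => Real.cos y ^ 2) (-2 * Real.cos y * Real.sin y) y := by
    have := hc.pow 2
    refine this.congr_deriv ?_; ring
  have h4 : HasDerivAt (fun y : ℝ => 2 * Real.cos y) (2 * (-Real.sin y)) y := by
    have := (hasDerivAt_const y (2:ℝ)).mul hc
    refine this.congr_deriv ?_; ring
  have h5 : HasDerivAt (fun y : ℝ => (π/2) * Real.cos y) ((π/2) * (-Real.sin y)) y := by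
    have := (hasDerivAt_const y (π/2)).mul hc
    refine this.congr_deriv ?_; ring
  have := (((((hasDerivAt_const y (1:ℝ)).add h4).sub h1).add h2).sub h5).sub h3
  refine this.congr_deriv ?_
  ring

theorem stmt7 (x : ℝ) (h0 : 0 < x) (h1 : x < π / 2) :
    π / 2 + Real.cos x < x / Real.sin x + 2 * (x / Real.tan x) ∧
    x / Real.sin x + 2 * (x / Real.tan x) < 2 + Real.cos x := by
  have hpi := Real.pi_pos
  have hs : 0 < Real.sin x := Real.sin_pos_of_pos_of_lt_pi h0 (by linarith)
  have hc : 0 < Real.cos x := Real.cos_pos_of_mem_Ioo ⟨by linarith, h1⟩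
  have hslt : ∀ y : ℝ, 0 < y → Real.sin y < y := fun y hy => Real.sin_lt hy
  -- upper bound: gFun x > 0
  have hgmono : StrictMonoOn gFun (Set.Icc 0 (π/2)) := by
    apply strictMonoOn_of_deriv_pos (convex_Icc _ _)
    · exact Continuous.continuousOn (by unfold gFun; continuity)
    · intro y hy
      rw [interior_Icc] at hy
      rw [(gFun_deriv y).deriv]
      have hsy : 0 < Real.sin y := Real.sin_pos_of_pos_of_lt_pi hy.1 (by linarith [hy.2])
      have := hslt y hy.1
      nlinarith
  have hg0 : gFun 0 = 0 := by simp [gFun]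
  have hgx : 0 < gFun x := by
    have := hgmono (Set.mem_Icc.2 ⟨le_refl 0, by linarith⟩)
      (Set.mem_Icc.2 ⟨le_of_lt h0, le_of_lt h1⟩) h0
    rwa [hg0] at this
  -- lower bound via concavity of hFun
  have hderiv : deriv hFun = h1Fun := funext fun y => (hFun_deriv y).deriv
  have hconc : StrictConcaveOn ℝ (Set.Icc 0 (π/2)) hFun := by
    apply strictConcaveOn_of_deriv2_neg (convex_Icc _ _)
    · exact Continuous.continuousOn (by unfold hFun; continuity)
    · intro y hy
      rw [interior_Icc] at hy
      have hd2 : deriv^[2] hFun y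
          = (π/2 - 4) * Real.sin y + 4 * Real.sin y * Real.cos y - 2 * y * Real.cos y := by
        show deriv (deriv hFun) y = _
        rw [hderiv]; exact (h1Fun_deriv y).deriv
      rw [hd2]
      have hsy : 0 < Real.sin y := Real.sin_pos_of_pos_of_lt_pi hy.1 (by linarith [hy.2])
      have hcy : 0 < Real.cos y := Real.cos_pos_of_mem_Ioo ⟨by linarith [hy.1], hy.2⟩
      have hsl := Real.sin_lt hy.1
      have hcle := Real.cos_le_one y
      nlinarith [Real.pi_lt_d2, mul_lt_mul_of_pos_right hsl hcy, mul_le_of_le_one_right hsy.le hcle]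
  have hh0 : hFun 0 = 0 := by simp [hFun]
  have hhpi : hFun (π/2) = 0 := by simp [hFun]
  have hhx : 0 < hFun x := by
    have ht1 : (0:ℝ) ≤ 1 - x / (π/2) := by
      rw [sub_nonneg, div_le_one (by linarith)]; linarith
    have ht1' : (0:ℝ) < 1 - x / (π/2) := by
      rw [sub_pos, div_lt_one (by linarith)]; linarith
    have ht2 : (0:ℝ) < x / (π/2) := div_pos h0 (by linarith)
    have := hconc.2 (Set.mem_Icc.2 ⟨le_refl 0, by linarith⟩)
      (Set.mem_Icc.2 ⟨by linarith, le_refl _⟩) (by intro h; rw [← h] at h1; linarith)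
      ht1' ht2 (by ring)
    rw [hh0, hhpi] at this
    simp only [smul_eq_mul, mul_zero, add_zero, zero_add] at this
    have hx' : x / (π/2) * (π/2) = x := by field_simp
    rwa [hx'] at this
  -- combine
  have hgx' : x * (1 + 2 * Real.cos x) < (2 + Real.cos x) * Real.sin x := by
    unfold gFun at hgx; linarith
  have hhx' : (π/2 + Real.cos x) * Real.sin x < x * (1 + 2 * Real.cos x) := by
    unfold hFun at hhx; linarith
  have htan : x / Real.tan x = x * Real.cos x / Real.sin x := by
    rw [Real.tan_eq_sin_div_cos]
    field_simp
  have hsum : x / Real.sin x + 2 * (x * Real.cos x / Real.sin x)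
      = (x * (1 + 2 * Real.cos x)) / Real.sin x := by
    field_simp
  constructor
  · rw [htan, hsum, lt_div_iff₀ hs]; linarith
  · rw [htan, hsum, div_lt_iff₀ hs]; linarith
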